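/- Let Ω be a compact metric space and T : Ω → Ω a homeomorphism (not necessarily minimal). Then PRP(Ω,T), the set of points whose forward orbit has the repetition property, is a Gδ subset of Ω (a countable intersection of open sets). -/

import Mathlib

open Filter Topology MeasureTheory

/-- A sequence in a metric space has the repetition property if for every `ε > 0` and
`r > 0` there is a positive integer `q` such that `dist (u k) (u (k+q)) < ε` for all
`k = 0, 1, …, ⌊r * q⌋`. -/
def RepetitionProperty {Ω : Type*} [PseudoMetricSpace Ω] (u : ℕ → Ω) : Prop :=
  ∀ ε > (0 : ℝ), ∀ r > (0 : ℝ), ∃ q : ℕ, 0 < q ∧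
    ∀ k : ℕ, k ≤ ⌊r * q⌋₊ → dist (u k) (u (k + q)) < ε

/-- `PRP T` is the set of points whose forward orbit under `T` has the repetition
property. -/
def PRP {Ω : Type*} [PseudoMetricSpace Ω] (T : Ω → Ω) : Set Ω :=
  { ω | RepetitionProperty fun k => T^[k] ω }

/-- For any homeomorphism `T` of a compact metric space, `PRP (Ω, T)` is a `Gδ` set. -/
theorem PRP_isGδ {Ω : Type*} [MetricSpace Ω] [CompactSpace Ω] (T : Ω ≃ₜ Ω) :
    IsGδ (PRP (⇑T)) := by
  have hcont : ∀ k : ℕ, Continuous fun ω : Ω => T^[k] ω := fun k =>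
    T.continuous.iterate k
  have key : PRP (⇑T) =
      ⋂ n : ℕ, ⋃ q : ℕ, ⋃ _ : 0 < q,
        ⋂ k ∈ Finset.range (⌊((n : ℝ) + 1) * q⌋₊ + 1),
          {ω : Ω | dist (T^[k] ω) (T^[k + q] ω) < 1 / ((n : ℝ) + 1)} := by
    ext ω
    simp only [Set.mem_iInter, Set.mem_iUnion, Set.mem_setOf_eq, Finset.mem_range,
      PRP, RepetitionProperty]
    constructor
    · intro h n
      have hn1 : (0 : ℝ) < (n : ℝ) + 1 := by positivity
      obtain ⟨q, hq, H⟩ := h (1 / ((n : ℝ) + 1)) (by positivity) ((n : ℝ) + 1) hn1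
      exact ⟨q, hq, fun k hk => H k (Nat.lt_succ_iff.mp hk)⟩
    · intro h ε hε r hr
      obtain ⟨n0, hn0⟩ := exists_nat_gt (1 / ε)
      set n : ℕ := max n0 ⌈r⌉₊ with hn
      obtain ⟨q, hq, H⟩ := h n
      refine ⟨q, hq, fun k hk => ?_⟩
      have hrn : r ≤ (n : ℝ) + 1 := by
        calc r ≤ (⌈r⌉₊ : ℝ) := Nat.le_ceil r
        _ ≤ (n : ℝ) := by exact_mod_cast le_max_right n0 ⌈r⌉₊
        _ ≤ (n : ℝ) + 1 := by linarith
      have hfl : ⌊r * q⌋₊ ≤ ⌊((n : ℝ) + 1) * q⌋₊ := by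
        apply Nat.floor_le_floor
        apply mul_le_mul_of_nonneg_right hrn (by positivity)
      have hdist := H k (Nat.lt_succ_iff.mpr (le_trans hk hfl))
      have heps : 1 / ((n : ℝ) + 1) ≤ ε := by
        rw [div_le_iff₀ (by positivity)]
        have h1 : 1 / ε < (n : ℝ) + 1 := by
          calc 1 / ε < (n0 : ℝ) := hn0
          _ ≤ (n : ℝ) := by exact_mod_cast le_max_left n0 ⌈r⌉₊
          _ ≤ (n : ℝ) + 1 := by linarith
        rw [div_lt_iff₀ hε] at h1
        linarith
      exact lt_of_lt_of_le hdist heps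
  rw [key]
  apply IsGδ.iInter_of_isOpen
  intro n
  apply isOpen_iUnion
  intro q
  apply isOpen_iUnion
  intro _
  apply isOpen_biInter_finset
  intro k _
  exact isOpen_lt (((hcont k).dist (hcont (k + q)))) continuous_const
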